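/- Let α be a type of messages with a strict partial order ≺ (modelling causal precedence), let σ be a type of replica states, and let f : σ → α → σ commute on concurrent messages. If l₁ and l₂ are lists over α that are permutations of each other, each contains no duplicate elements, and each respects causal order, then for every initial state s we have List.foldl f s l₁ = List.foldl f s l₂. (This is the convergence argument: two correct replicas that deliver the same set of messages, each in some causal order, end in the same state.) -/

import Mathlib

/-- A list `l` respects causal order w.r.t. the causal precedence relation
`prec`: it has no duplicates, and whenever `prec a b` and both occur in `l`,
then `a` occurs before `b` in `l`. -/
def RespectsCausalOrder {α : Type*} (prec : α → α → Prop) (l : List α) : Prop :=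
  l.Nodup ∧ ∀ a b : α, prec a b → a ∈ l → b ∈ l → [a, b].Sublist l

theorem sub_drop {α : Type*} {s u v : List α} {a : α}
    (h : s.Sublist (u ++ a :: v)) (ha : a ∉ s) : s.Sublist (u ++ v) := by
  induction u generalizing s with
  | nil =>
    cases h with
    | cons _ h' => exact h'
    | cons_cons _ h' => exact absurd List.mem_cons_self ha
  | cons b u ih =>
    cases h with
    | cons _ h' => exact (ih h' ha).trans (List.sublist_cons_self b _)
    | cons_cons _ h' =>
      exact List.Sublist.cons_cons b (ih h' (fun hx => ha (List.mem_cons_of_mem _ hx)))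

theorem mid_mem {α : Type*} {u v : List α} {a x : α}
    (h : [a, x].Sublist (u ++ a :: v)) (ha : a ∉ u) : x ∈ v := by
  induction u with
  | nil =>
    cases h with
    | cons _ h' => exact h'.subset (by simp)
    | cons_cons _ h' => exact h'.subset (by simp)
  | cons b u ih =>
    cases h with
    | cons _ h' => exact ih h' (fun hx => ha (List.mem_cons_of_mem _ hx))
    | cons_cons _ h' => exact absurd List.mem_cons_self ha

theorem foldl_swap {α σ : Type*} (f : σ → α → σ) (a : α) (u : List α)
    (h : ∀ (s : σ) (x : α), x ∈ u → f (f s a) x = f (f s x) a) (s : σ) :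
    f (List.foldl f s u) a = List.foldl f (f s a) u := by
  induction u generalizing s with
  | nil => rfl
  | cons b u ih =>
    simp only [List.foldl_cons]
    rw [ih (fun s x hx => h s x (List.mem_cons_of_mem _ hx)),
        h s b List.mem_cons_self]


/-- Convergence: if `f` commutes on concurrent messages, then folding `f` over
two duplicate-free causal-order-respecting permutations of the same set of
messages yields the same state. -/
theorem foldl_eq_of_respectsCausalOrder {α σ : Type*} (prec : α → α → Prop)
    (hirr : ∀ a : α, ¬ prec a a)
    (htrans : ∀ a b c : α, prec a b → prec b c → prec a c)
    (f : σ → α → σ)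
    (hcomm : ∀ (s : σ) (a b : α), ¬ prec a b → ¬ prec b a →
      f (f s a) b = f (f s b) a)
    (l₁ l₂ : List α) (hperm : l₁.Perm l₂)
    (h₁ : RespectsCausalOrder prec l₁) (h₂ : RespectsCausalOrder prec l₂)
    (s : σ) :
    List.foldl f s l₁ = List.foldl f s l₂ := by
  induction l₁ generalizing l₂ s with
  | nil => rw [hperm.nil_eq]
  | cons a t₁ ih =>
    have ha2 : a ∈ l₂ := hperm.subset List.mem_cons_self
    obtain ⟨u, v, rfl⟩ := List.mem_iff_append.mp ha2
    have hnd2 := h₂.1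
    have hanu : a ∉ u := fun h => (List.nodup_append'.mp hnd2).2.2 h List.mem_cons_self
    have hanv : a ∉ v := by
      have := (List.nodup_append'.mp hnd2).2.1
      exact (List.nodup_cons.mp this).1
    have hnd1 := h₁.1
    have hant : a ∉ t₁ := (List.nodup_cons.mp hnd1).1
    -- every x in u is concurrent with a
    have hconc : ∀ x ∈ u, ¬ prec a x ∧ ¬ prec x a := by
      intro x hxu
      have hxl2 : x ∈ u ++ a :: v := List.mem_append_left _ hxu
      have hxne : x ≠ a := fun h => hanu (h ▸ hxu)
      constructor
      · intro hax
        have hsub := h₂.2 a x hax ha2 hxl2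
        have hxv : x ∈ v := mid_mem hsub hanu
        exact (List.disjoint_of_nodup_append hnd2) hxu (List.mem_cons_of_mem _ hxv)
      · intro hxa
        have hx1 : x ∈ a :: t₁ := hperm.symm.subset hxl2
        have hsub := h₁.2 x a hxa hx1 List.mem_cons_self
        cases hsub with
        | cons _ h' => exact hant (h'.subset (by simp))
        | cons_cons _ h' => exact absurd rfl hxne
    -- restructure l₂
    have key : List.foldl f s (u ++ a :: v) = List.foldl f (f s a) (u ++ v) := by
      rw [List.foldl_append, List.foldl_cons, List.foldl_append,
        foldl_swap f a u (fun s x hx => hcomm s a x (hconc x hx).1 (hconc x hx).2)]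
    rw [key, List.foldl_cons]
    -- permutation for IH
    have hperm' : t₁.Perm (u ++ v) := by
      have : (a :: t₁).Perm (a :: (u ++ v)) :=
        hperm.trans (List.perm_middle)
      exact this.cons_inv
    refine ih _ hperm' ?_ ?_ (f s a)
    · refine ⟨(List.nodup_cons.mp hnd1).2, fun x y hxy hx hy => ?_⟩
      have hsub := h₁.2 x y hxy (List.mem_cons_of_mem _ hx) (List.mem_cons_of_mem _ hy)
      cases hsub with
      | cons _ h' => exact h'
      | cons_cons _ h' => exact absurd hx hant
    · constructor
      · exact hperm'.nodup_iff.mp (List.nodup_cons.mp hnd1).2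
      · intro x y hxy hx hy
        have hxne : x ≠ a := fun h => (by rcases List.mem_append.mp hx with h'|h'
                                          exacts [hanu (h ▸ h'), hanv (h ▸ h')])
        have hyne : y ≠ a := fun h => (by rcases List.mem_append.mp hy with h'|h'
                                          exacts [hanu (h ▸ h'), hanv (h ▸ h')])
        have hx2 : x ∈ u ++ a :: v := (List.sublist_append_right u v |> fun _ => by
          rcases List.mem_append.mp hx with h'|h'
          exacts [List.mem_append_left _ h', List.mem_append_right _ (List.mem_cons_of_mem _ h')])
        have hy2 : y ∈ u ++ a :: v := by
          rcases List.mem_append.mp hy with h'|h'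
          exacts [List.mem_append_left _ h', List.mem_append_right _ (List.mem_cons_of_mem _ h')]
        have hsub := h₂.2 x y hxy hx2 hy2
        exact sub_drop hsub (by simp [Ne.symm hxne, Ne.symm hyne])
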